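/- arXiv:1109.5160 — 2 statements merged into one kernel-verified Lean document; each statement's English description precedes it below -/
import Mathlib

section
/- Let (a_i)_{i∈ℤ} be square-summable real numbers and for n∈ℕ, j∈ℤ set b_{n,j} = ∑_{i=1}^n a_{i−j} and b_n = (∑_{j∈ℤ} b_{n,j}²)^{1/2} (with b_0 = 0). Then for all n, m ∈ ℕ, ∑_{j∈ℤ} b_{n,j} b_{m,j} = ½ (b_n² + b_m² − b_{|n−m|}²), all series converging absolutely. -/
open MeasureTheory ProbabilityTheory Filter Topology BoundedContinuousFunction
open scoped ENNReal NNReal BigOperators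

/-- Product-form coefficients `a_i = ∏_{q=1}^d a_{i_q}(q)`. -/
def prodCoef {d : ℕ} (aq : Fin d → ℤ → ℝ) (i : Fin d → ℤ) : ℝ :=
  ∏ q : Fin d, aq q (i q)

/-- The rectangle `Λ_n = {1,…,n_1} × ⋯ × {1,…,n_d} ⊂ ℤ^d`. -/
noncomputable def Lambda (d : ℕ) (n : Fin d → ℕ) : Finset (Fin d → ℤ) :=
  Fintype.piFinset fun q => Finset.Icc 1 (n q : ℤ)

/-- `b_{n,j} = ∑_{i ∈ Λ_n} a_{i-j}` for product-form coefficients. -/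
noncomputable def bProd {d : ℕ} (aq : Fin d → ℤ → ℝ) (n : Fin d → ℕ) (j : Fin d → ℤ) : ℝ :=
  ∑ i ∈ Lambda d n, prodCoef aq (i - j)

/-- One-dimensional coefficients `b_{n,j}(q) = ∑_{i=1}^{n_q} a_{i-j_q}(q)`. -/
noncomputable def b1 (a : ℤ → ℝ) (nq : ℕ) (jq : ℤ) : ℝ :=
  ∑ i ∈ Finset.Icc (1 : ℤ) (nq : ℤ), a (i - jq)

/-- `b_n(q) = (∑_{j_q ∈ ℤ} b_{n,j}(q)²)^{1/2}`. -/
noncomputable def b1norm (a : ℤ → ℝ) (nq : ℕ) : ℝ :=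
  Real.sqrt (∑' j : ℤ, (b1 a nq j) ^ 2)

lemma summable_sq_aux (a : ℤ → ℝ) (ha : Summable fun i : ℤ => (a i) ^ 2) (n : ℕ) :
    Summable (fun j : ℤ => (b1 a n j) ^ 2) := by
  have h1 : ∀ i : ℤ, Summable (fun j : ℤ => (a (i - j)) ^ 2) := fun i =>
    ha.comp_injective (fun x y h => by simpa using sub_right_injective h :
      Function.Injective (fun j : ℤ => i - j))
  have h2 : Summable (fun j : ℤ => ∑ i ∈ Finset.Icc (1 : ℤ) (n : ℤ), (a (i - j))^2) :=
    summable_sum fun i _ => h1 i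
  apply Summable.of_nonneg_of_le (fun j => sq_nonneg _)
    (fun j => ?_) (h2.mul_left ((Finset.Icc (1 : ℤ) (n : ℤ)).card : ℝ))
  exact sq_sum_le_card_mul_sum_sq

lemma summable_mul_abs_aux (a : ℤ → ℝ) (ha : Summable fun i : ℤ => (a i) ^ 2) (n m : ℕ) :
    Summable (fun j : ℤ => |b1 a n j * b1 a m j|) := by
  have h := ((summable_sq_aux a ha n).add (summable_sq_aux a ha m)).mul_left (1/2 : ℝ)
  apply Summable.of_nonneg_of_le (fun j => abs_nonneg _) (fun j => ?_) h
  have := sq_nonneg (|b1 a n j| - |b1 a m j|)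
  rw [abs_mul]
  nlinarith [sq_abs (b1 a n j), sq_abs (b1 a m j)]

lemma b1_diff_aux (a : ℤ → ℝ) (n m : ℕ) (hmn : m ≤ n) (j : ℤ) :
    b1 a n j - b1 a m j = b1 a (n - m) (j - m) := by
  unfold b1
  have hsplit : Finset.Icc (1 : ℤ) (n : ℤ) =
      Finset.Icc (1 : ℤ) (m : ℤ) ∪ Finset.Icc ((m : ℤ) + 1) (n : ℤ) := by
    ext x; simp; omega
  have hdisj : Disjoint (Finset.Icc (1 : ℤ) (m : ℤ)) (Finset.Icc ((m : ℤ) + 1) (n : ℤ)) := by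
    simp [Finset.disjoint_left]; omega
  rw [hsplit, Finset.sum_union hdisj]
  have : ∑ i ∈ Finset.Icc ((m : ℤ) + 1) (n : ℤ), a (i - j)
      = ∑ i ∈ Finset.Icc (1 : ℤ) ((n - m : ℕ) : ℤ), a (i - (j - m)) := by
    have hmap : Finset.Icc ((m : ℤ) + 1) (n : ℤ)
        = (Finset.Icc (1 : ℤ) ((n - m : ℕ) : ℤ)).map (addRightEmbedding (m : ℤ)) := by
      ext x; simp [addRightEmbedding]
      constructor
      · intro hx; exact ⟨x - m, by omega, by omega⟩
      · rintro ⟨y, hy, rfl⟩; omega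
    rw [hmap, Finset.sum_map]
    apply Finset.sum_congr rfl
    intro x _; simp [addRightEmbedding]; ring_nf
  rw [this]; ring

lemma polar_aux (a : ℤ → ℝ) (ha : Summable fun i : ℤ => (a i) ^ 2) (n m : ℕ) (hmn : m ≤ n) :
    ∑' j : ℤ, b1 a n j * b1 a m j =
      (1 / 2) * ((∑' j : ℤ, (b1 a n j) ^ 2) + (∑' j : ℤ, (b1 a m j) ^ 2) -
        ∑' j : ℤ, (b1 a (n - m) j) ^ 2) := by
  have hsn := summable_sq_aux a ha n
  have hsm := summable_sq_aux a ha m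
  have hp : Summable (fun j : ℤ => b1 a n j * b1 a m j) :=
    summable_abs_iff.1 (summable_mul_abs_aux a ha n m)
  have hshift : ∑' j : ℤ, (b1 a (n - m) j) ^ 2
      = ∑' j : ℤ, (b1 a (n - m) (j - (m : ℤ))) ^ 2 :=
    ((Equiv.subRight (m : ℤ)).tsum_eq (fun j => (b1 a (n - m) j) ^ 2)).symm
  have hd : ∀ j : ℤ, (b1 a (n - m) (j - (m : ℤ))) ^ 2
      = ((b1 a n j) ^ 2 + (b1 a m j) ^ 2) - 2 * (b1 a n j * b1 a m j) := by
    intro j; rw [← b1_diff_aux a n m hmn j]; ring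
  have h2 : ∑' j : ℤ, (b1 a (n - m) (j - (m : ℤ))) ^ 2
      = ((∑' j : ℤ, (b1 a n j) ^ 2) + (∑' j : ℤ, (b1 a m j) ^ 2))
        - 2 * (∑' j : ℤ, b1 a n j * b1 a m j) := by
    simp_rw [hd]
    rw [Summable.tsum_sub (hsn.add hsm) (hp.mul_left 2), Summable.tsum_add hsn hsm,
      tsum_mul_left]
  rw [hshift, h2]; ring

/-- one-dimensional polarization identity:
`∑_j b_{n,j} b_{m,j} = ½ (b_n² + b_m² - b_{|n-m|}²)`, all series converging absolutely. -/
theorem one_dim_polarization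
    (a : ℤ → ℝ) (ha : Summable fun i : ℤ => (a i) ^ 2) (n m : ℕ) :
    Summable (fun j : ℤ => |b1 a n j * b1 a m j|) ∧
    ∑' j : ℤ, b1 a n j * b1 a m j =
      (1 / 2) * ((∑' j : ℤ, (b1 a n j) ^ 2) + (∑' j : ℤ, (b1 a m j) ^ 2) -
        ∑' j : ℤ, (b1 a (Nat.dist n m) j) ^ 2) := by

  refine ⟨summable_mul_abs_aux a ha n m, ?_⟩
  rcases le_total m n with h | h
  · rw [Nat.dist_eq_sub_of_le_right h]
    exact polar_aux a ha n m h
  · have := polar_aux a ha m n h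
    rw [Nat.dist_eq_sub_of_le h]
    simp_rw [mul_comm (b1 a n _) (b1 a m _)] at this ⊢
    rw [this]; ring
end

section
/- Assume product-form coefficients with each b_n(q) → ∞ and regular variation (RV): there exists H ∈ (0,1)^d with lim_{n→∞} b_{⌊s n⌋}(q)² / b_n(q)² = s^{2H_q} for every s∈[0,1] and q = 1,…,d. Fix m∈ℕ, t^{(1)},…,t^{(m)} ∈ [0,1]^d, and λ_1,…,λ_m ∈ ℝ, and set n^{(r)} = (⌊n_1 t^{(r)}_1⌋,…,⌊n_d t^{(r)}_d⌋) and b̃_n² = ∑_{j∈ℤ^d} (∑_{r=1}^m λ_r b_{n^{(r)},j})². Then lim_{n→∞} b̃_n² / b_n² = ∑_{r=1}^m ∑_{s=1}^m λ_r λ_s ∏_{q=1}^d ½ [ (t^{(r)}_q)^{2H_q} + (t^{(s)}_q)^{2H_q} − |t^{(r)}_q − t^{(s)}_q|^{2H_q} ]. -/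
open MeasureTheory ProbabilityTheory Filter Topology BoundedContinuousFunction
open scoped ENNReal NNReal BigOperators

/-- Regular variation (RV) of the one-dimensional norms along `N` with exponent `Hq`:
`b_{⌊sn⌋}(q)²/b_n(q)² → s^{2 H_q}` for every `s ∈ [0,1]`. -/
def RegVary (a : ℤ → ℝ) (N : ℕ → ℕ) (Hq : ℝ) : Prop :=
  ∀ s : ℝ, s ∈ Set.Icc (0 : ℝ) 1 →
    Filter.Tendsto (fun n => (b1norm a (⌊s * (N n : ℝ)⌋₊)) ^ 2 / (b1norm a (N n)) ^ 2)
      Filter.atTop (nhds (s ^ (2 * Hq)))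

/-- The fractional-Brownian covariance kernel `½(t^{2H} + s^{2H} - |t-s|^{2H})`. -/
noncomputable def hurstCov (H t s : ℝ) : ℝ :=
  (t ^ (2 * H) + s ^ (2 * H) - |t - s| ^ (2 * H)) / 2

section AuxProof

open Filter Topology
open scoped RealInnerProductSpace

set_option maxHeartbeats 1000000

lemma rpow_toReal_two (x : ℝ) : x ^ ((2:ℝ≥0∞)).toReal = x ^ 2 := by
  rw [show ((2:ℝ≥0∞)).toReal = ((2:ℕ):ℝ) by norm_num, Real.rpow_natCast]

lemma memℓp_shift (a : ℤ → ℝ) (ha : Summable fun i => a i ^ 2) (i : ℤ) :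
    Memℓp (fun j : ℤ => a (i - j)) 2 := by
  apply memℓp_gen
  simp only [rpow_toReal_two, Real.norm_eq_abs, sq_abs]
  exact ((Equiv.subLeft i).summable_iff (f := fun x => a x ^ 2)).2 ha

noncomputable def Tv (a : ℤ → ℝ) (ha : Summable fun i => a i ^ 2) (i : ℤ) :
    lp (fun _ : ℤ => ℝ) 2 :=
  ⟨fun j => a (i - j), memℓp_shift a ha i⟩

@[simp] lemma Tv_apply (a : ℤ → ℝ) (ha : Summable fun i => a i ^ 2) (i j : ℤ) :
    (Tv a ha i : ∀ _ : ℤ, ℝ) j = a (i - j) := rfl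

noncomputable def Bv (a : ℤ → ℝ) (ha : Summable fun i => a i ^ 2) (n : ℕ) :
    lp (fun _ : ℤ => ℝ) 2 :=
  ∑ i ∈ Finset.Icc (1 : ℤ) (n : ℤ), Tv a ha i

@[simp] lemma Bv_apply (a : ℤ → ℝ) (ha : Summable fun i => a i ^ 2) (n : ℕ) (j : ℤ) :
    (Bv a ha n : ∀ _ : ℤ, ℝ) j = b1 a n j := by
  rw [Bv, lp.coeFn_sum, Finset.sum_apply]
  rfl

lemma normsq_eq_tsum (f : lp (fun _ : ℤ => ℝ) 2) : ‖f‖ ^ 2 = ∑' j, (f j) ^ 2 := by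
  have h := lp.norm_rpow_eq_tsum (p := 2) (by norm_num) f
  simp only [rpow_toReal_two, Real.norm_eq_abs, sq_abs] at h
  exact h

lemma summable_coord_sq (f : lp (fun _ : ℤ => ℝ) 2) : Summable fun j => (f j) ^ 2 := by
  have h := (lp.memℓp f).summable (p := 2) (by norm_num)
  simpa only [rpow_toReal_two, Real.norm_eq_abs, sq_abs] using h

lemma b1norm_eq_norm (a : ℤ → ℝ) (ha : Summable fun i => a i ^ 2) (n : ℕ) :
    b1norm a n = ‖Bv a ha n‖ := by
  rw [b1norm]
  have : ∑' j : ℤ, (b1 a n j) ^ 2 = ‖Bv a ha n‖ ^ 2 := by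
    rw [normsq_eq_tsum]; simp
  rw [this, Real.sqrt_sq (norm_nonneg _)]

lemma b1norm_nonneg (a : ℤ → ℝ) (n : ℕ) : 0 ≤ b1norm a n := Real.sqrt_nonneg _

lemma Icc_eq_Ioc (n : ℤ) : Finset.Icc (1:ℤ) n = Finset.Ioc (0:ℤ) n := by
  ext x; simp [Int.lt_iff_add_one_le]

lemma coe_sum_Ioc (a : ℤ → ℝ) (ha : Summable fun i => a i ^ 2) (k : ℤ) (n : ℕ) (j : ℤ) :
    ((∑ i ∈ Finset.Ioc k (k + (n:ℤ)), Tv a ha i : lp (fun _ : ℤ => ℝ) 2) : ∀ _ : ℤ, ℝ) j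
      = b1 a n (j - k) := by
  rw [lp.coeFn_sum, Finset.sum_apply]
  have hmap : Finset.Ioc k (k + (n:ℤ)) = Finset.map (addRightEmbedding k) (Finset.Ioc 0 (n:ℤ)) := by
    rw [Finset.map_add_right_Ioc]; ring_nf
  rw [hmap, Finset.sum_map, b1, Icc_eq_Ioc]
  apply Finset.sum_congr rfl
  intro i _
  simp only [addRightEmbedding, Function.Embedding.coeFn_mk, Tv_apply]
  ring_nf

lemma norm_sum_Ioc (a : ℤ → ℝ) (ha : Summable fun i => a i ^ 2) (k : ℤ) (n : ℕ) :
    ‖(∑ i ∈ Finset.Ioc k (k + (n:ℤ)), Tv a ha i : lp (fun _ : ℤ => ℝ) 2)‖ = b1norm a n := by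
  have h1 : ‖(∑ i ∈ Finset.Ioc k (k + (n:ℤ)), Tv a ha i : lp (fun _ : ℤ => ℝ) 2)‖ ^ 2
      = ∑' j : ℤ, (b1 a n (j - k)) ^ 2 := by
    rw [normsq_eq_tsum]
    exact tsum_congr fun j => by rw [coe_sum_Ioc a ha k n j]
  have h2 : ∑' j : ℤ, (b1 a n (j - k)) ^ 2 = ∑' j : ℤ, (b1 a n j) ^ 2 :=
    (Equiv.subRight k).tsum_eq (fun x => (b1 a n x) ^ 2)
  rw [b1norm, ← h2, ← h1, Real.sqrt_sq (norm_nonneg _)]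

lemma Bv_sub (a : ℤ → ℝ) (ha : Summable fun i => a i ^ 2) {n1 n2 : ℕ} (h : n1 ≤ n2) :
    Bv a ha n2 - Bv a ha n1 = ∑ i ∈ Finset.Ioc (n1:ℤ) (n2:ℤ), Tv a ha i := by
  have hu : Finset.Ioc (0:ℤ) (n2:ℤ) = Finset.Ioc 0 (n1:ℤ) ∪ Finset.Ioc (n1:ℤ) (n2:ℤ) :=
    (Finset.Ioc_union_Ioc_eq_Ioc (by positivity) (by exact_mod_cast h)).symm
  rw [Bv, Bv, Icc_eq_Ioc, Icc_eq_Ioc, hu,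
    Finset.sum_union (Finset.disjoint_left.mpr (fun x hx hx' => by simp only [Finset.mem_Ioc] at hx hx'; omega))]
  abel

lemma norm_Bv_sub (a : ℤ → ℝ) (ha : Summable fun i => a i ^ 2) {n1 n2 : ℕ} (h : n1 ≤ n2) :
    ‖Bv a ha n2 - Bv a ha n1‖ = b1norm a (n2 - n1) := by
  rw [Bv_sub a ha h]
  have hcast : (n1:ℤ) + ((n2 - n1 : ℕ):ℤ) = (n2:ℤ) := by
    push_cast [Nat.cast_sub h]; ring
  rw [← hcast]
  exact norm_sum_Ioc a ha (n1:ℤ) (n2 - n1)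

lemma inner_Bv (a : ℤ → ℝ) (ha : Summable fun i => a i ^ 2) {n1 n2 : ℕ} (h : n1 ≤ n2) :
    ⟪Bv a ha n1, Bv a ha n2⟫
      = (b1norm a n1 ^ 2 + b1norm a n2 ^ 2 - b1norm a (n2 - n1) ^ 2) / 2 := by
  have hp := norm_sub_sq_real (Bv a ha n2) (Bv a ha n1)
  rw [norm_Bv_sub a ha h] at hp
  rw [real_inner_comm] at hp
  rw [b1norm_eq_norm a ha n1, b1norm_eq_norm a ha n2]
  linarith

lemma b1norm_succ_diff (a : ℤ → ℝ) (ha : Summable fun i => a i ^ 2) (n : ℕ) :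
    |b1norm a (n+1) - b1norm a n| ≤ b1norm a 1 := by
  have h := abs_norm_sub_norm_le (Bv a ha (n+1)) (Bv a ha n)
  rw [norm_Bv_sub a ha (Nat.le_succ n)] at h
  simpa [b1norm_eq_norm a ha, Nat.succ_sub_one] using h

lemma ratio_perturb (a : ℤ → ℝ) (ha : Summable fun i => a i ^ 2)
    (N k m' : ℕ → ℕ) (hkm : ∀ n, m' n ≤ k n ∧ k n ≤ m' n + 1)
    (hb : Tendsto (fun n => b1norm a (N n)) atTop atTop) (L : ℝ)
    (hL : Tendsto (fun n => b1norm a (m' n) ^ 2 / b1norm a (N n) ^ 2) atTop (𝓝 L)) :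
    Tendsto (fun n => b1norm a (k n) ^ 2 / b1norm a (N n) ^ 2) atTop (𝓝 L) := by
  set C := b1norm a 1 with hC
  set x := fun n => b1norm a (m' n) with hx
  set y := fun n => b1norm a (N n) with hyy
  set z := fun n => b1norm a (k n) with hz
  have hC0 : 0 ≤ C := b1norm_nonneg a 1
  have hzx : ∀ n, |z n - x n| ≤ C := by
    intro n
    rcases Nat.le_and_le_add_one_iff.mp ⟨(hkm n).1, (hkm n).2⟩ with h | h
    · simp [hz, hx, h, hC0]
    · simp only [hz, hx]
      rw [h]
      exact b1norm_succ_diff a ha (m' n)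
  have hxy : Tendsto (fun n => x n / y n) atTop (𝓝 (Real.sqrt L)) := by
    have h1 := (Real.continuous_sqrt.tendsto L).comp hL
    refine h1.congr fun n => ?_
    rw [Function.comp_apply, ← div_pow,
      Real.sqrt_sq (div_nonneg (b1norm_nonneg _ _) (b1norm_nonneg _ _))]
  have hyinv : Tendsto (fun n => (y n)⁻¹) atTop (𝓝 0) := hb.inv_tendsto_atTop
  have hdiff : Tendsto (fun n => z n ^ 2 / y n ^ 2 - x n ^ 2 / y n ^ 2) atTop (𝓝 0) := by
    have hg : Tendsto (fun n => 2 * C * (x n / y n) * (y n)⁻¹ + C * C * ((y n)⁻¹ * (y n)⁻¹))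
        atTop (𝓝 0) := by
      have : Tendsto (fun n => 2 * C * (x n / y n) * (y n)⁻¹ + C * C * ((y n)⁻¹ * (y n)⁻¹))
          atTop (𝓝 (2 * C * Real.sqrt L * 0 + C * C * (0 * 0))) :=
        (((tendsto_const_nhds.mul hxy).mul hyinv).add
          (tendsto_const_nhds.mul (hyinv.mul hyinv)))
      simpa using this
    apply squeeze_zero_norm' ?_ hg
    · filter_upwards [hb.eventually_ge_atTop 1] with n hy1
      have hy0 : 0 < y n := lt_of_lt_of_le one_pos hy1
      have hx0 : 0 ≤ x n := b1norm_nonneg _ _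
      have hz0 : 0 ≤ z n := b1norm_nonneg _ _
      have hbound : |z n ^ 2 - x n ^ 2| ≤ C * (2 * x n + C) := by
        have h1 := hzx n
        have h2 : z n ≤ x n + C := by
          have := abs_le.mp h1; linarith [this.2]
        have h3 : x n - C ≤ z n := by
          have := abs_le.mp h1; linarith [this.1]
        rw [abs_le]
        constructor <;> nlinarith
      rw [div_sub_div_same, Real.norm_eq_abs, abs_div, abs_of_nonneg (sq_nonneg (y n))]
      rw [div_le_iff₀ (by positivity)]
      calc |z n ^ 2 - x n ^ 2| ≤ C * (2 * x n + C) := hbound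
        _ = (2 * C * (x n / y n) * (y n)⁻¹ + C * C * ((y n)⁻¹ * (y n)⁻¹)) * y n ^ 2 := by
            field_simp
  have := hL.add hdiff
  rw [add_zero] at this
  refine this.congr fun n => ?_
  ring

lemma hurstCov_comm (H t s : ℝ) : hurstCov H t s = hurstCov H s t := by
  rw [hurstCov, hurstCov, abs_sub_comm]; ring

lemma inner_limit_le (a : ℤ → ℝ) (ha : Summable fun i => a i ^ 2) (N' : ℕ → ℕ)
    (hb : Tendsto (fun n => b1norm a (N' n)) atTop atTop)
    (Hq : ℝ) (hRV : RegVary a N' Hq)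
    {tr ts : ℝ} (htr : tr ∈ Set.Icc (0:ℝ) 1) (hts : ts ∈ Set.Icc (0:ℝ) 1) (hle : tr ≤ ts) :
    Tendsto (fun n => ⟪Bv a ha ⌊tr * (N' n : ℝ)⌋₊, Bv a ha ⌊ts * (N' n : ℝ)⌋₊⟫
        / b1norm a (N' n) ^ 2)
      atTop (𝓝 (hurstCov Hq tr ts)) := by
  set u := ts - tr with hu
  have hu01 : u ∈ Set.Icc (0:ℝ) 1 := by
    constructor
    · simp [hu]; linarith
    · simp [hu]; linarith [htr.1, hts.2]
  have hmono : ∀ n, ⌊tr * (N' n : ℝ)⌋₊ ≤ ⌊ts * (N' n : ℝ)⌋₊ := fun n =>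
    Nat.floor_mono (mul_le_mul_of_nonneg_right hle (Nat.cast_nonneg _))
  have hfloor : ∀ n, ⌊u * (N' n : ℝ)⌋₊ ≤ ⌊ts * (N' n : ℝ)⌋₊ - ⌊tr * (N' n : ℝ)⌋₊ ∧
      ⌊ts * (N' n : ℝ)⌋₊ - ⌊tr * (N' n : ℝ)⌋₊ ≤ ⌊u * (N' n : ℝ)⌋₊ + 1 := by
    intro n
    set c : ℝ := (N' n : ℝ) with hc
    have hc0 : (0:ℝ) ≤ c := Nat.cast_nonneg _
    have hsplit : ts * c = tr * c + u * c := by rw [hu]; ring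
    have h1 : ⌊tr * c⌋₊ + ⌊u * c⌋₊ ≤ ⌊ts * c⌋₊ := by
      apply Nat.le_floor
      push_cast
      rw [hsplit]
      have := Nat.floor_le (mul_nonneg htr.1 hc0)
      have := Nat.floor_le (mul_nonneg hu01.1 hc0)
      linarith
    have h2 : ⌊ts * c⌋₊ ≤ ⌊tr * c⌋₊ + ⌊u * c⌋₊ + 1 := by
      have hlt : ts * c < (⌊tr * c⌋₊ + ⌊u * c⌋₊ + 2 : ℕ) := by
        push_cast
        have := Nat.lt_floor_add_one (tr * c)
        have := Nat.lt_floor_add_one (u * c)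
        rw [hsplit]; linarith
      have := (Nat.floor_lt (mul_nonneg hts.1 hc0)).mpr hlt
      omega
    have h3 := hmono n
    omega
  have hz := ratio_perturb a ha N'
    (fun n => ⌊ts * (N' n : ℝ)⌋₊ - ⌊tr * (N' n : ℝ)⌋₊)
    (fun n => ⌊u * (N' n : ℝ)⌋₊) (fun n => hfloor n) hb _ (hRV u hu01)
  have hmain := (((hRV tr htr).add (hRV ts hts)).sub hz).div_const 2
  have heq : (tr ^ (2 * Hq) + ts ^ (2 * Hq) - u ^ (2 * Hq)) / 2 = hurstCov Hq tr ts := by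
    rw [hurstCov, abs_sub_comm, abs_of_nonneg (by linarith : (0:ℝ) ≤ ts - tr)]
  rw [heq] at hmain
  refine hmain.congr fun n => ?_
  rw [inner_Bv a ha (hmono n)]
  ring

lemma bProd_eq {d : ℕ} (aq : Fin d → ℤ → ℝ) (n : Fin d → ℕ) (j : Fin d → ℤ) :
    bProd aq n j = ∏ q : Fin d, b1 (aq q) (n q) (j q) := by
  rw [bProd, Lambda]
  rw [show (∏ q : Fin d, b1 (aq q) (n q) (j q))
      = ∏ q : Fin d, ∑ i ∈ Finset.Icc (1:ℤ) ((n q : ℕ) : ℤ), aq q (i - j q) from rfl]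
  rw [Finset.prod_univ_sum]
  apply Finset.sum_congr rfl
  intro p _
  rfl

lemma pi_summable_abs : ∀ {d : ℕ} (F : Fin d → ℤ → ℝ), (∀ q, Summable fun x => |F q x|) →
    Summable fun j : Fin d → ℤ => |∏ q, F q (j q)| := by
  intro d
  induction d with
  | zero =>
    intro F _
    have h1 : ∀ j : Fin 0 → ℤ, |∏ q, F q (j q)| = 1 := fun j => by simp
    exact (hasSum_single (f := fun j : Fin 0 → ℤ => |∏ q, F q (j q)|) default
      (fun b hb => absurd (Subsingleton.elim b default) hb)).summable
  | succ d ih =>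
    intro F h
    have e := Fin.consEquiv (fun _ : Fin (d+1) => ℤ)
    refine ((Fin.consEquiv (fun _ : Fin (d+1) => ℤ)).summable_iff).mp ?_
    have hs := ((h 0).mul_of_nonneg (ih (fun q => F q.succ) (fun q => h q.succ))
      (fun x => abs_nonneg _) (fun y => abs_nonneg _))
    refine hs.congr fun p => ?_
    simp [Fin.consEquiv, Fin.prod_univ_succ, abs_mul]

lemma pi_summable {d : ℕ} (F : Fin d → ℤ → ℝ) (h : ∀ q, Summable fun x => |F q x|) :
    Summable fun j : Fin d → ℤ => ∏ q, F q (j q) :=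
  summable_abs_iff.mp (pi_summable_abs F h)

lemma pi_tsum_prod : ∀ {d : ℕ} (F : Fin d → ℤ → ℝ), (∀ q, Summable fun x => |F q x|) →
    ∑' j : Fin d → ℤ, ∏ q, F q (j q) = ∏ q, ∑' x, F q x := by
  intro d
  induction d with
  | zero =>
    intro F _
    have h1 : (fun j : Fin 0 → ℤ => ∏ q, F q (j q)) = fun _ => 1 := by
      funext j; simp
    rw [h1, tsum_eq_single (default : Fin 0 → ℤ)
      (fun b hb => absurd (Subsingleton.elim b default) hb)]
    simp
  | succ d ih =>
    intro F h
    rw [← (Fin.consEquiv (fun _ : Fin (d+1) => ℤ)).tsum_eq (fun j => ∏ q, F q (j q))]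
    have hpt : ∀ p : ℤ × (Fin d → ℤ),
        (∏ q, F q ((Fin.consEquiv (fun _ : Fin (d+1) => ℤ)) p q))
          = F 0 p.1 * ∏ q : Fin d, F q.succ (p.2 q) := by
      intro p
      simp [Fin.consEquiv, Fin.prod_univ_succ]
    rw [tsum_congr hpt]
    have hf : Summable fun x => ‖F 0 x‖ := by simpa [Real.norm_eq_abs] using h 0
    have hg : Summable fun y : Fin d → ℤ => ‖∏ q : Fin d, F q.succ (y q)‖ := by
      simpa [Real.norm_eq_abs, Finset.abs_prod] using pi_summable_abs (fun q => F q.succ) (fun q => h q.succ)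
    rw [← tsum_mul_tsum_of_summable_norm hf hg]
    rw [ih (fun q => F q.succ) (fun q => h q.succ), Fin.prod_univ_succ]

lemma summable_abs_mul (f g : lp (fun _ : ℤ => ℝ) 2) : Summable fun j => |f j * g j| := by
  refine Summable.of_nonneg_of_le (fun j => abs_nonneg _) (fun j => ?_)
    (((summable_coord_sq f).add (summable_coord_sq g)).div_const 2)
  rw [abs_mul]
  nlinarith [sq_nonneg (|f j| - |g j|), sq_abs (f j), sq_abs (g j),
    abs_nonneg (f j), abs_nonneg (g j)]

lemma inner_eq_tsum_mul (f g : lp (fun _ : ℤ => ℝ) 2) : ⟪f, g⟫ = ∑' j, f j * g j := by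
  rw [lp.inner_eq_tsum]
  exact tsum_congr fun j => by
    simp [RCLike.inner_apply, starRingEnd_apply, star_trivial, mul_comm]

lemma tsum_expand {d : ℕ} (aq : Fin d → ℤ → ℝ) (hsq : ∀ q, Summable fun i => (aq q i) ^ 2)
    (m : ℕ) (lam : Fin m → ℝ) (k : Fin m → Fin d → ℕ) :
    ∑' j : Fin d → ℤ, (∑ r : Fin m, lam r * bProd aq (k r) j) ^ 2
      = ∑ r : Fin m, ∑ s : Fin m, lam r * lam s *
          ∏ q : Fin d, ⟪Bv (aq q) (hsq q) (k r q), Bv (aq q) (hsq q) (k s q)⟫ := by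
  have habs : ∀ r s : Fin m, ∀ q : Fin d,
      Summable fun x : ℤ => |b1 (aq q) (k r q) x * b1 (aq q) (k s q) x| := by
    intro r s q
    have := summable_abs_mul (Bv (aq q) (hsq q) (k r q)) (Bv (aq q) (hsq q) (k s q))
    simpa [Bv_apply] using this
  have hsumm : ∀ r s : Fin m,
      Summable fun j : Fin d → ℤ =>
        lam r * lam s * ∏ q : Fin d, (b1 (aq q) (k r q) (j q) * b1 (aq q) (k s q) (j q)) :=
    fun r s => (pi_summable _ (habs r s)).mul_left _
  have hpt : ∀ j : Fin d → ℤ,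
      (∑ r : Fin m, lam r * bProd aq (k r) j) ^ 2
        = ∑ r : Fin m, ∑ s : Fin m, lam r * lam s *
            ∏ q : Fin d, (b1 (aq q) (k r q) (j q) * b1 (aq q) (k s q) (j q)) := by
    intro j
    rw [sq, Finset.sum_mul_sum]
    apply Finset.sum_congr rfl; intro r _
    apply Finset.sum_congr rfl; intro s _
    rw [bProd_eq, bProd_eq, Finset.prod_mul_distrib]
    ring
  have hinner : ∀ r s : Fin m,
      ∑' j : Fin d → ℤ, (lam r * lam s *
          ∏ q : Fin d, (b1 (aq q) (k r q) (j q) * b1 (aq q) (k s q) (j q)))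
        = lam r * lam s *
          ∏ q : Fin d, ⟪Bv (aq q) (hsq q) (k r q), Bv (aq q) (hsq q) (k s q)⟫ := by
    intro r s
    rw [tsum_mul_left]
    congr 1
    rw [pi_tsum_prod _ (habs r s)]
    apply Finset.prod_congr rfl; intro q _
    rw [inner_eq_tsum_mul]
    exact (tsum_congr fun x => by simp [Bv_apply]).symm
  calc ∑' j : Fin d → ℤ, (∑ r : Fin m, lam r * bProd aq (k r) j) ^ 2
      = ∑' j : Fin d → ℤ, ∑ r : Fin m, ∑ s : Fin m, lam r * lam s *
          ∏ q : Fin d, (b1 (aq q) (k r q) (j q) * b1 (aq q) (k s q) (j q)) := tsum_congr hpt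
    _ = ∑ r : Fin m, ∑' j : Fin d → ℤ, ∑ s : Fin m, lam r * lam s *
          ∏ q : Fin d, (b1 (aq q) (k r q) (j q) * b1 (aq q) (k s q) (j q)) :=
        Summable.tsum_finsetSum (fun r _ => summable_sum (fun s _ => hsumm r s))
    _ = ∑ r : Fin m, ∑ s : Fin m, ∑' j : Fin d → ℤ, lam r * lam s *
          ∏ q : Fin d, (b1 (aq q) (k r q) (j q) * b1 (aq q) (k s q) (j q)) :=
        Finset.sum_congr rfl (fun r _ => Summable.tsum_finsetSum (fun s _ => hsumm r s))
    _ = ∑ r : Fin m, ∑ s : Fin m, lam r * lam s *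
          ∏ q : Fin d, ⟪Bv (aq q) (hsq q) (k r q), Bv (aq q) (hsq q) (k s q)⟫ :=
        Finset.sum_congr rfl (fun r _ => Finset.sum_congr rfl (fun s _ => hinner r s))

lemma inner_limit (a : ℤ → ℝ) (ha : Summable fun i => a i ^ 2) (N' : ℕ → ℕ)
    (hb : Filter.Tendsto (fun n => b1norm a (N' n)) Filter.atTop Filter.atTop)
    (Hq : ℝ) (hRV : RegVary a N' Hq)
    {tr ts : ℝ} (htr : tr ∈ Set.Icc (0:ℝ) 1) (hts : ts ∈ Set.Icc (0:ℝ) 1) :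
    Filter.Tendsto (fun n => ⟪Bv a ha ⌊tr * (N' n : ℝ)⌋₊, Bv a ha ⌊ts * (N' n : ℝ)⌋₊⟫
        / b1norm a (N' n) ^ 2)
      Filter.atTop (nhds (hurstCov Hq tr ts)) := by
  rcases le_total tr ts with h | h
  · exact inner_limit_le a ha N' hb Hq hRV htr hts h
  · have h2 := inner_limit_le a ha N' hb Hq hRV hts htr h
    rw [hurstCov_comm]
    refine h2.congr fun n => ?_
    rw [real_inner_comm]

end AuxProof

open Filter Topology in
open scoped RealInnerProductSpace in
set_option maxHeartbeats 1000000 in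
/-- under regular variation (RV), for fixed `t^{(1)},…,t^{(m)}` and
`λ_1,…,λ_m`, the normalized squared norm `b̃_n²/b_n²` of the linear combination of
coefficients converges to the fractional-Brownian-sheet variance of `∑ λ_r 𝔹^H(t^{(r)})`. -/
theorem btilde_norm_limit
    (d : ℕ) (hd : 1 ≤ d)
    (aq : Fin d → ℤ → ℝ) (hsq : ∀ q, Summable fun i : ℤ => (aq q i) ^ 2)
    (N : ℕ → Fin d → ℕ) (hN : ∀ q, Filter.Tendsto (fun n => N n q) Filter.atTop Filter.atTop)
    (hbq : ∀ q, Filter.Tendsto (fun n => b1norm (aq q) (N n q)) Filter.atTop Filter.atTop)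
    (H : Fin d → ℝ) (hH : ∀ q, H q ∈ Set.Ioo (0 : ℝ) 1)
    (hRV : ∀ q, RegVary (aq q) (fun n => N n q) (H q))
    (m : ℕ) (t : Fin m → Fin d → ℝ) (ht : ∀ r q, t r q ∈ Set.Icc (0 : ℝ) 1)
    (lam : Fin m → ℝ) :
    Filter.Tendsto
      (fun n =>
        (∑' j : Fin d → ℤ,
          (∑ r : Fin m, lam r * bProd aq (fun q => ⌊t r q * (N n q : ℝ)⌋₊) j) ^ 2) /
          (∏ q : Fin d, b1norm (aq q) (N n q)) ^ 2)
      Filter.atTop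
      (nhds (∑ r : Fin m, ∑ s : Fin m,
        lam r * lam s * ∏ q : Fin d, hurstCov (H q) (t r q) (t s q))) := by
  have key : ∀ r s : Fin m, ∀ q : Fin d, Filter.Tendsto (fun n =>
      ⟪Bv (aq q) (hsq q) ⌊t r q * (N n q : ℝ)⌋₊, Bv (aq q) (hsq q) ⌊t s q * (N n q : ℝ)⌋₊⟫
        / b1norm (aq q) (N n q) ^ 2) Filter.atTop (nhds (hurstCov (H q) (t r q) (t s q))) :=
    fun r s q =>
      inner_limit (aq q) (hsq q) (fun n => N n q) (hbq q) (H q) (hRV q) (ht r q) (ht s q)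
  have main : Filter.Tendsto (fun n => ∑ r : Fin m, ∑ s : Fin m, lam r * lam s *
      ∏ q : Fin d, (⟪Bv (aq q) (hsq q) ⌊t r q * (N n q : ℝ)⌋₊,
          Bv (aq q) (hsq q) ⌊t s q * (N n q : ℝ)⌋₊⟫ / b1norm (aq q) (N n q) ^ 2))
      Filter.atTop (nhds (∑ r : Fin m, ∑ s : Fin m,
        lam r * lam s * ∏ q : Fin d, hurstCov (H q) (t r q) (t s q))) := by
    apply tendsto_finset_sum; intro r _
    apply tendsto_finset_sum; intro s _
    exact tendsto_const_nhds.mul (tendsto_finset_prod _ (fun q _ => key r s q))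
  refine main.congr fun n => ?_
  rw [tsum_expand aq hsq m lam (fun r q => ⌊t r q * (N n q : ℝ)⌋₊), ← Finset.prod_pow,
    Finset.sum_div]
  refine Finset.sum_congr rfl fun r _ => ?_
  rw [Finset.sum_div]
  refine Finset.sum_congr rfl fun s _ => ?_
  rw [Finset.prod_div_distrib, mul_div_assoc]
end
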